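/- Let η > 0 and 0 < ρ ≤ η. Define K₋(α) = sin(παρ)·sin(πα(2η − ρ))/(π²α²ρ). Then for every real t, 0 ≤ ∫_ℝ e(αt) K₋(α) dα ≤ U_η(t) ≤ ∫_ℝ e(αt) K₊(α) dα ≤ 1, where K₊(α) = sin(παρ)·sin(πα(2η + ρ))/(π²α²ρ), U_η(t) = 1 if |t| < η and 0 otherwise, and e(x) = e^{2πix}. -/

import Mathlib

open Real MeasureTheory Complex Set
open scoped FourierTransform

lemma fourier_indicator (a : ℝ) (ha : 0 < a) {α : ℝ} (hα : α ≠ 0) :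
    (∫ x : ℝ, Complex.exp (((-2 * π * x * α : ℝ) : ℂ) * Complex.I) *
      Set.indicator (Icc (-a) a) (fun _ => (1:ℂ)) x)
    = ((Real.sin (2 * π * α * a) / (π * α) : ℝ) : ℂ) := by
  have hc : ((-2 * π * α : ℝ) : ℂ) * Complex.I ≠ 0 := by
    apply mul_ne_zero _ Complex.I_ne_zero
    simpa using mul_ne_zero (mul_ne_zero (by norm_num : (-2:ℝ) ≠ 0) Real.pi_ne_zero) hα
  have step1 : (∫ x : ℝ, Complex.exp (((-2 * π * x * α : ℝ) : ℂ) * Complex.I) *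
      Set.indicator (Icc (-a) a) (fun _ => (1:ℂ)) x)
      = ∫ x in Icc (-a) a, Complex.exp ((((-2 * π * α : ℝ) : ℂ) * Complex.I) * x) := by
    rw [← integral_indicator measurableSet_Icc]
    congr 1
    funext x
    rw [Set.indicator_apply, Set.indicator_apply]
    split_ifs
    · rw [mul_one]; congr 1; push_cast; ring
    · rw [mul_zero]
  rw [step1, MeasureTheory.integral_Icc_eq_integral_Ioc,
    ← intervalIntegral.integral_of_le (by linarith : -a ≤ a),
    integral_exp_mul_complex hc]
  rw [show (((-2 * π * α : ℝ) : ℂ) * Complex.I) * (a : ℂ) = ((-(2*π*α*a) : ℝ) : ℂ) * Complex.I by push_cast; ring,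
    show (((-2 * π * α : ℝ) : ℂ) * Complex.I) * ((-a : ℝ) : ℂ) = (((2*π*α*a) : ℝ) : ℂ) * Complex.I by push_cast; ring,
    Complex.exp_mul_I, Complex.exp_mul_I]
  rw [← Complex.ofReal_cos, ← Complex.ofReal_sin, ← Complex.ofReal_cos, ← Complex.ofReal_sin,
    Real.cos_neg, Real.sin_neg]
  rw [div_eq_iff hc]
  have hπ : (π:ℂ) ≠ 0 := Complex.ofReal_ne_zero.2 Real.pi_ne_zero
  have hαc : (α:ℂ) ≠ 0 := Complex.ofReal_ne_zero.2 hα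
  push_cast
  field_simp
  ring

lemma fourier_conv (g h : ℝ → ℂ) (hg : Integrable g) (hh : Integrable h) (α : ℝ) :
    (∫ t : ℝ, Complex.exp (((-2 * π * t * α : ℝ) : ℂ) * Complex.I) * ∫ x : ℝ, g x * h (t - x))
    = (∫ x : ℝ, Complex.exp (((-2 * π * x * α : ℝ) : ℂ) * Complex.I) * g x) *
      (∫ t : ℝ, Complex.exp (((-2 * π * t * α : ℝ) : ℂ) * Complex.I) * h t) := by
  set E : ℝ → ℂ := fun u => Complex.exp (((-2 * π * u * α : ℝ) : ℂ) * Complex.I) with hE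
  have hEadd : ∀ u v : ℝ, E (u + v) = E u * E v := by
    intro u v
    simp only [hE, ← Complex.exp_add]
    congr 1
    push_cast
    ring
  have hEnorm : ∀ u : ℝ, ‖E u‖ = 1 := by
    intro u
    simp [hE, Complex.norm_exp]
  have hEcont : Continuous E := by
    apply Complex.continuous_exp.comp
    fun_prop
  have h1 : Integrable (fun p : ℝ × ℝ => g p.2 * h (p.1 - p.2)) (volume.prod volume) := by
    simpa using hg.convolution_integrand (ContinuousLinearMap.mul ℝ ℂ) hh
  have hint : Integrable (fun p : ℝ × ℝ => E p.1 * (g p.2 * h (p.1 - p.2))) (volume.prod volume) := by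
    apply h1.bdd_mul (c := 1) ((hEcont.comp continuous_fst).aestronglyMeasurable)
    exact ae_of_all _ fun p => le_of_eq (hEnorm p.1)
  calc (∫ t : ℝ, E t * ∫ x : ℝ, g x * h (t - x))
      = ∫ t : ℝ, ∫ x : ℝ, E t * (g x * h (t - x)) := by
        congr 1; funext t; rw [integral_const_mul]
    _ = ∫ x : ℝ, ∫ t : ℝ, E t * (g x * h (t - x)) := integral_integral_swap hint
    _ = ∫ x : ℝ, (E x * g x) * ∫ t : ℝ, E t * h t := by
        congr 1; funext x
        have hsub : (∫ t : ℝ, E t * (g x * h (t - x))) = ∫ t : ℝ, E (t + x) * (g x * h t) := by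
          rw [← integral_add_right_eq_self (fun t : ℝ => E t * (g x * h (t - x))) x]
          simp
        rw [hsub]
        simp_rw [hEadd, show ∀ t : ℝ, E t * E x * (g x * h t) = (E x * g x) * (E t * h t) by intro t; ring]
        rw [integral_const_mul]
    _ = (∫ x : ℝ, E x * g x) * ∫ t : ℝ, E t * h t := by rw [integral_mul_const]

noncomputable def trap (a c : ℝ) : ℝ → ℂ :=
  fun t => ((max (min a (t + c) - max (-a) (t - c)) 0 : ℝ) : ℂ)

lemma integrable_indicator_Icc (a : ℝ) :
    Integrable (Set.indicator (Icc (-a) a) (fun _ => (1:ℂ))) := by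
  rw [integrable_indicator_iff measurableSet_Icc]
  exact integrableOn_const measure_Icc_lt_top.ne

lemma trap_eq_conv (a c : ℝ) (t : ℝ) :
    trap a c t = ∫ x : ℝ, Set.indicator (Icc (-a) a) (fun _ => (1:ℂ)) x *
      Set.indicator (Icc (-c) c) (fun _ => (1:ℂ)) (t - x) := by
  have key : ∀ x : ℝ, Set.indicator (Icc (-a) a) (fun _ => (1:ℂ)) x *
      Set.indicator (Icc (-c) c) (fun _ => (1:ℂ)) (t - x)
      = Set.indicator (Icc (max (-a) (t - c)) (min a (t + c))) (fun _ => (1:ℂ)) x := by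
    intro x
    by_cases hx : x ∈ Icc (max (-a) (t - c)) (min a (t + c))
    · have hx' := hx
      simp only [mem_Icc, max_le_iff, le_min_iff] at hx'
      have h1 : x ∈ Icc (-a) a := mem_Icc.2 ⟨hx'.1.1, hx'.2.1⟩
      have h2 : t - x ∈ Icc (-c) c := mem_Icc.2 ⟨by linarith [hx'.2.2], by linarith [hx'.1.2]⟩
      rw [Set.indicator_of_mem hx, Set.indicator_of_mem h1, Set.indicator_of_mem h2, one_mul]
    · rw [Set.indicator_of_notMem hx]
      by_cases h1 : x ∈ Icc (-a) a
      · have h2 : t - x ∉ Icc (-c) c := by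
          intro h2
          simp only [mem_Icc] at h1 h2
          exact hx (mem_Icc.2 ⟨max_le h1.1 (by linarith [h2.2]), le_min h1.2 (by linarith [h2.1])⟩)
        rw [Set.indicator_of_notMem h2, mul_zero]
      · rw [Set.indicator_of_notMem h1, zero_mul]
  simp_rw [key]
  rw [integral_indicator_const (1:ℂ) measurableSet_Icc, Real.volume_real_Icc,
    Complex.real_smul, mul_one, trap]

lemma trap_continuous (a c : ℝ) : Continuous (trap a c) := by
  apply Complex.continuous_ofReal.comp
  exact ((continuous_const.min (continuous_id.add continuous_const)).sub
    (continuous_const.max (continuous_id.sub continuous_const))).max continuous_const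

lemma trap_compact_support (a c : ℝ) (ha : 0 < a) (hac : a ≤ c) :
    HasCompactSupport (trap a c) := by
  apply HasCompactSupport.intro (isCompact_Icc (a := -(a + c)) (b := a + c))
  intro x hx
  simp only [mem_Icc, not_and_or, not_le] at hx
  have hle : min a (x + c) ≤ max (-a) (x - c) := by
    rcases hx with hx | hx
    · exact le_trans (min_le_right _ _) (le_trans (by linarith) (le_max_left _ _))
    · exact le_trans (min_le_left _ _) (le_trans (by linarith) (le_max_right _ _))
  simp only [trap, Complex.ofReal_eq_zero]
  exact max_eq_right (by linarith)

lemma trap_integrable (a c : ℝ) (ha : 0 < a) (hac : a ≤ c) : Integrable (trap a c) :=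
  (trap_continuous a c).integrable_of_hasCompactSupport (trap_compact_support a c ha hac)

lemma fourier_trap (a c : ℝ) (ha : 0 < a) (hac : a ≤ c) {α : ℝ} (hα : α ≠ 0) :
    𝓕 (trap a c) α
      = ((Real.sin (2 * π * α * a) * Real.sin (2 * π * α * c) / (π ^ 2 * α ^ 2) : ℝ) : ℂ) := by
  rw [Real.fourier_real_eq_integral_exp_smul]
  simp_rw [smul_eq_mul, trap_eq_conv]
  have := fourier_conv (Set.indicator (Icc (-a) a) (fun _ => (1:ℂ)))
    (Set.indicator (Icc (-c) c) (fun _ => (1:ℂ)))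
    (integrable_indicator_Icc a) (integrable_indicator_Icc c) α
  rw [this, fourier_indicator a ha hα, fourier_indicator c (by linarith) hα]
  rw [← Complex.ofReal_mul]
  congr 1
  rw [div_mul_div_comm]
  congr 1 <;> ring

noncomputable def K2 (a c : ℝ) : ℝ → ℂ :=
  fun α => ((Real.sin (2*π*α*a) * Real.sin (2*π*α*c) / (π^2*α^2) : ℝ) : ℂ)

lemma K2_integrable (a c : ℝ) (ha : 0 < a) (hac : a ≤ c) : Integrable (K2 a c) := by
  have hc : 0 < c := lt_of_lt_of_le ha hac
  apply Integrable.mono' (integrable_inv_one_add_sq.const_mul (4*a*c + 1/π^2))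
  · apply Measurable.aestronglyMeasurable
    unfold K2
    fun_prop
  · refine ae_of_all _ fun α => ?_
    rw [K2, Complex.norm_real, Real.norm_eq_abs]
    rcases eq_or_ne α 0 with h | h
    · simp only [h]
      norm_num
      positivity
    · have hd : 0 < π^2*α^2 := by positivity
      rw [abs_div, abs_of_pos hd, abs_mul, div_le_iff₀ hd]
      have h1 : |Real.sin (2*π*α*a)| ≤ |2*π*α*a| := Real.abs_sin_le_abs
      have h1' : |Real.sin (2*π*α*c)| ≤ |2*π*α*c| := Real.abs_sin_le_abs
      have hprod : |2*π*α*a| * |2*π*α*c| = 4*π^2*α^2*(a*c) := by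
        rw [← abs_mul, show (2*π*α*a)*(2*π*α*c) = 4*π^2*α^2*(a*c) by ring]
        exact abs_of_nonneg (by positivity)
      have h2 : |Real.sin (2*π*α*a)| * |Real.sin (2*π*α*c)| ≤ 4*π^2*α^2*(a*c) := by
        calc |Real.sin (2*π*α*a)| * |Real.sin (2*π*α*c)| ≤ |2*π*α*a| * |2*π*α*c| :=
              mul_le_mul h1 h1' (abs_nonneg _) (abs_nonneg _)
          _ = 4*π^2*α^2*(a*c) := hprod
      have h3 : |Real.sin (2*π*α*a)| * |Real.sin (2*π*α*c)| ≤ 1 :=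
        mul_le_one₀ (abs_le.2 ⟨Real.neg_one_le_sin _, Real.sin_le_one _⟩) (abs_nonneg _)
          (abs_le.2 ⟨Real.neg_one_le_sin _, Real.sin_le_one _⟩)
      have hπ : 0 < π ^ 2 := by positivity
      have hinv : (1 + α^2)⁻¹ * (1 + α^2) = 1 := inv_mul_cancel₀ (by positivity)
      have expand : (4*a*c + 1/π^2) * (1 + α^2)⁻¹ * (π^2*α^2)
          = ((4*a*c*π^2*α^2 + α^2) * ((1 + α^2)⁻¹ * (1+α^2))) / (1+α^2) := by
        field_simp
      rw [expand, hinv, mul_one]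
      rw [le_div_iff₀ (by positivity : (0:ℝ) < 1 + α^2)]
      nlinarith [abs_nonneg (Real.sin (2*π*α*a)), abs_nonneg (Real.sin (2*π*α*c)), sq_nonneg α]

lemma ae_ne_zero : ∀ᵐ α : ℝ, α ≠ 0 := by
  rw [ae_iff]
  simp only [ne_eq, not_not, Set.setOf_eq_eq_singleton]
  exact measure_singleton 0

lemma key (a c : ℝ) (ha : 0 < a) (hac : a ≤ c) (t : ℝ) :
    (∫ α : ℝ, Complex.exp (2 * ↑π * Complex.I * ↑α * ↑t) *
        ((Real.sin (2*π*α*a) * Real.sin (2*π*α*c) / (π^2 * α^2 * (2*a)) : ℝ) : ℂ))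
    = ((max (min a (t+c) - max (-a) (t-c)) 0 / (2*a) : ℝ) : ℂ) := by
  have haeq : 𝓕 (trap a c) =ᵐ[volume] K2 a c := by
    filter_upwards [ae_ne_zero] with α hα using fourier_trap a c ha hac hα
  have hFint : Integrable (𝓕 (trap a c)) := (K2_integrable a c ha hac).congr haeq.symm
  have hinv : 𝓕⁻ (𝓕 (trap a c)) t = trap a c t :=
    (trap_integrable a c ha hac).fourierInv_fourier_eq hFint (trap_continuous a c).continuousAt
  have hmain : (∫ α : ℝ, Complex.exp (2 * ↑π * Complex.I * ↑α * ↑t) * K2 a c α) = trap a c t := by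
    rw [← hinv, Real.fourierInv_eq']
    apply integral_congr_ae
    filter_upwards [ae_ne_zero] with α hα
    rw [smul_eq_mul, fourier_trap a c ha hac hα]
    show Complex.exp _ * _ = Complex.exp _ * _
    congr 2
    simp only [RCLike.inner_apply, starRingEnd_apply, star_trivial]
    push_cast
    ring
  have hsplit : ∀ α : ℝ,
      Complex.exp (2 * ↑π * Complex.I * ↑α * ↑t) *
        ((Real.sin (2*π*α*a) * Real.sin (2*π*α*c) / (π^2 * α^2 * (2*a)) : ℝ) : ℂ)
      = (Complex.exp (2 * ↑π * Complex.I * ↑α * ↑t) * K2 a c α) / ((2*a : ℝ) : ℂ) := by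
    intro α
    simp only [K2]
    rw [show (π^2 * α^2 * (2*a)) = (π^2*α^2) * (2*a) by ring, ← div_div,
      Complex.ofReal_div, mul_div_assoc, mul_div_assoc]
  simp_rw [hsplit]
  rw [integral_div, hmain, trap, ← Complex.ofReal_div]


theorem stmt_7 (η ρ : ℝ) (hρ : 0 < ρ) (hρη : ρ ≤ η) (t : ℝ) :
    let Kminus : ℝ → ℝ := fun α =>
      Real.sin (π * α * ρ) * Real.sin (π * α * (2 * η - ρ)) / (π ^ 2 * α ^ 2 * ρ)
    let Kplus : ℝ → ℝ := fun α =>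
      Real.sin (π * α * ρ) * Real.sin (π * α * (2 * η + ρ)) / (π ^ 2 * α ^ 2 * ρ)
    let U : ℝ := if |t| < η then 1 else 0
    let Iminus : ℂ := ∫ α : ℝ, Complex.exp (2 * π * Complex.I * α * t) * (Kminus α : ℂ)
    let Iplus : ℂ := ∫ α : ℝ, Complex.exp (2 * π * Complex.I * α * t) * (Kplus α : ℂ)
    Iminus.im = 0 ∧ Iplus.im = 0 ∧
      0 ≤ Iminus.re ∧ Iminus.re ≤ U ∧ U ≤ Iplus.re ∧ Iplus.re ≤ 1 := by
  intro Kminus Kplus U Iminus Iplus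
  set vm : ℝ := max (min (ρ/2) (t+(η-ρ/2)) - max (-(ρ/2)) (t-(η-ρ/2))) 0 / (2*(ρ/2)) with hvm
  set vp : ℝ := max (min (ρ/2) (t+(η+ρ/2)) - max (-(ρ/2)) (t-(η+ρ/2))) 0 / (2*(ρ/2)) with hvp
  have e1 : Iminus = (vm : ℂ) := by
    rw [← key (ρ/2) (η - ρ/2) (by linarith) (by linarith) t]
    refine integral_congr_ae (Filter.Eventually.of_forall fun α => ?_)
    beta_reduce
    congr 1
    rw [Complex.ofReal_inj]
    show Real.sin (π * α * ρ) * Real.sin (π * α * (2 * η - ρ)) / (π ^ 2 * α ^ 2 * ρ) = _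
    rw [show 2*π*α*(ρ/2) = π * α * ρ by ring,
      show 2*π*α*(η - ρ/2) = π * α * (2*η - ρ) by ring,
      show π^2*α^2*(2*(ρ/2)) = π^2*α^2*ρ by ring]
  have e2 : Iplus = (vp : ℂ) := by
    rw [← key (ρ/2) (η + ρ/2) (by linarith) (by linarith) t]
    refine integral_congr_ae (Filter.Eventually.of_forall fun α => ?_)
    beta_reduce
    congr 1
    rw [Complex.ofReal_inj]
    show Real.sin (π * α * ρ) * Real.sin (π * α * (2 * η + ρ)) / (π ^ 2 * α ^ 2 * ρ) = _
    rw [show 2*π*α*(ρ/2) = π * α * ρ by ring,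
      show 2*π*α*(η + ρ/2) = π * α * (2*η + ρ) by ring,
      show π^2*α^2*(2*(ρ/2)) = π^2*α^2*ρ by ring]
  have hρ2 : (0:ℝ) < 2*(ρ/2) := by linarith
  have h0m : 0 ≤ vm := div_nonneg (le_max_right _ _) (le_of_lt hρ2)
  have h0p : 0 ≤ vp := div_nonneg (le_max_right _ _) (le_of_lt hρ2)
  have hUm : vm ≤ U := by
    show vm ≤ if |t| < η then (1:ℝ) else 0
    by_cases hT : |t| < η
    · rw [if_pos hT, hvm, div_le_one hρ2]
      refine max_le ?_ (by linarith)
      have l1 := min_le_left (ρ/2) (t+(η-ρ/2))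
      have l2 := le_max_left (-(ρ/2)) (t-(η-ρ/2))
      linarith
    · rw [if_neg hT]
      have habs : η ≤ |t| := not_lt.1 hT
      have hle : min (ρ/2) (t+(η-ρ/2)) - max (-(ρ/2)) (t-(η-ρ/2)) ≤ 0 := by
        rcases le_abs.1 habs with h | h
        · have l1 := min_le_left (ρ/2) (t+(η-ρ/2))
          have l2 := le_max_right (-(ρ/2)) (t-(η-ρ/2))
          linarith
        · have l1 := min_le_right (ρ/2) (t+(η-ρ/2))
          have l2 := le_max_left (-(ρ/2)) (t-(η-ρ/2))
          linarith
      rw [hvm, max_eq_right hle]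
      simp
  have hUp : U ≤ vp := by
    show (if |t| < η then (1:ℝ) else 0) ≤ vp
    by_cases hT : |t| < η
    · rw [if_pos hT]
      rcases abs_lt.1 hT with ⟨h1, h2⟩
      rw [hvp, min_eq_left (by linarith : ρ/2 ≤ t + (η+ρ/2)),
        max_eq_left (by linarith : t - (η+ρ/2) ≤ -(ρ/2)),
        show (ρ/2) - -(ρ/2) = 2*(ρ/2) by ring, max_eq_left (le_of_lt hρ2),
        div_self (ne_of_gt hρ2)]
    · rw [if_neg hT]; exact h0p
  have h1p : vp ≤ 1 := by
    rw [hvp, div_le_one hρ2]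
    refine max_le ?_ (by linarith)
    have l1 := min_le_left (ρ/2) (t+(η+ρ/2))
    have l2 := le_max_left (-(ρ/2)) (t-(η+ρ/2))
    linarith
  refine ⟨by rw [e1]; exact Complex.ofReal_im _, by rw [e2]; exact Complex.ofReal_im _,
    ?_, ?_, ?_, ?_⟩
  · rw [e1, Complex.ofReal_re]; exact h0m
  · rw [e1, Complex.ofReal_re]; exact hUm
  · rw [e2, Complex.ofReal_re]; exact hUp
  · rw [e2, Complex.ofReal_re]; exact h1p
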